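/- Let r, s, t ∈ {0,1,2,3} and ε₁, ε₂, ε₃, ε₄ ∈ {1, −1}, and let f : {0,1}³ → ℂ satisfy f(0,0,0) = 1, f(0,0,1) = 𝔦^r, f(0,1,0) = 𝔦^s, f(0,1,1) = ε₁𝔦^{r+s}, f(1,0,0) = 𝔦^t, f(1,0,1) = ε₂𝔦^{r+t}, f(1,1,0) = ε₃𝔦^{s+t}, f(1,1,1) = ε₄𝔦^{r+s+t}. Then f is affine if and only if ε₁ε₂ε₃ε₄ = 1. -/

import Mathlib

/-- `𝔦^r` for `r ∈ ℤ₄`; well defined since `𝔦⁴ = 1`. -/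
noncomputable def iPow (r : ZMod 4) : ℂ := Complex.I ^ r.val

/-- View `0, 1 ∈ ℤ₂` as elements of `ℤ₄`. -/
def z2z4 (a : ZMod 2) : ZMod 4 := (a.val : ZMod 4)

/-- Evaluation at a `{0,1}`-point of the multilinear polynomial over `ℤ₄` whose
coefficient on the monomial `∏_{i ∈ S} xᵢ` is `c S`. -/
def evalML4 {ι : Type*} [Fintype ι] [DecidableEq ι]
    (c : Finset ι → ZMod 4) (x : ι → ZMod 2) : ZMod 4 :=
  ∑ S : Finset ι, c S * ∏ i ∈ S, z2z4 (x i)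

/-- `x` extended by a final coordinate `1` (at `none`). -/
def extend1 {ι : Type*} (x : ι → ZMod 2) : Option ι → ZMod 2 := fun o => o.elim 1 x

/-- A signature is affine if it is `λ · χ_{A(x,1)ᵀ = 0} · 𝔦^{Q(x)}` for a matrix `A`
over `ℤ₂` and a multilinear polynomial `Q` over `ℤ₄` of total degree at most 2
whose cross terms all have even coefficients. -/
def IsAffine {ι : Type*} [Fintype ι] [DecidableEq ι] (f : (ι → ZMod 2) → ℂ) : Prop :=
  ∃ (lam : ℂ) (m : ℕ) (A : Matrix (Fin m) (Option ι) (ZMod 2))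
    (c : Finset ι → ZMod 4),
    (∀ S : Finset ι, 2 < S.card → c S = 0) ∧
    (∀ S : Finset ι, S.card = 2 → ∃ t : ZMod 4, c S = 2 * t) ∧
    ∀ x : ι → ZMod 2,
      f x = lam * (if A.mulVec (extend1 x) = 0 then 1 else 0) * iPow (evalML4 c x)

lemma iPow_natCast (n : ℕ) : iPow (n : ZMod 4) = Complex.I ^ n := by
  have h4 : (Complex.I : ℂ) ^ 4 = 1 := by
    norm_num [pow_succ, Complex.I_mul_I]
  have hv : ((n : ZMod 4)).val = n % 4 := ZMod.val_natCast 4 n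
  rw [iPow, hv]
  conv_rhs => rw [← Nat.div_add_mod n 4, pow_add, pow_mul, h4, one_pow, one_mul]

lemma iPow_add (a b : ZMod 4) : iPow (a + b) = iPow a * iPow b := by
  have h1 : ((a.val + b.val : ℕ) : ZMod 4) = a + b := by
    push_cast
    rw [ZMod.natCast_val, ZMod.natCast_val, ZMod.cast_id, ZMod.cast_id]
  have := iPow_natCast (a.val + b.val)
  rw [h1, pow_add] at this
  rw [this]; rfl

lemma sum_finset_fin3 {M : Type*} [AddCommMonoid M] (g : Finset (Fin 3) → M) :
    ∑ S : Finset (Fin 3), g S =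
      g ∅ + g {0} + g {1} + g {2} + g {0,1} + g {0,2} + g {1,2} + g {0,1,2} := by
  rw [show (Finset.univ : Finset (Finset (Fin 3))) =
      {∅, {0}, {1}, {2}, {0,1}, {0,2}, {1,2}, {0,1,2}} from by decide]
  rw [Finset.sum_insert (by decide), Finset.sum_insert (by decide),
      Finset.sum_insert (by decide), Finset.sum_insert (by decide),
      Finset.sum_insert (by decide), Finset.sum_insert (by decide),
      Finset.sum_insert (by decide), Finset.sum_singleton]
  abel

lemma evalML4_eval (c : Finset (Fin 3) → ZMod 4) (x : Fin 3 → ZMod 2) :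
    evalML4 c x = c ∅ + c {0} * z2z4 (x 0) + c {1} * z2z4 (x 1) + c {2} * z2z4 (x 2)
      + c {0,1} * (z2z4 (x 0) * z2z4 (x 1)) + c {0,2} * (z2z4 (x 0) * z2z4 (x 2))
      + c {1,2} * (z2z4 (x 1) * z2z4 (x 2))
      + c {0,1,2} * (z2z4 (x 0) * z2z4 (x 1) * z2z4 (x 2)) := by
  rw [evalML4, sum_finset_fin3]
  rw [Finset.prod_empty, Finset.prod_singleton, Finset.prod_singleton,
      Finset.prod_singleton,
      Finset.prod_insert (by decide), Finset.prod_singleton,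
      Finset.prod_insert (by decide), Finset.prod_singleton,
      Finset.prod_insert (by decide), Finset.prod_singleton,
      Finset.prod_insert (by decide), Finset.prod_insert (by decide),
      Finset.prod_singleton]
  ring

def cfun (t s r : ℕ) (w₃ w₂ w₁ : ZMod 4) : Finset (Fin 3) → ZMod 4 := fun S =>
  if S = {0} then (t : ZMod 4) else if S = {1} then (s : ZMod 4)
  else if S = {2} then (r : ZMod 4)
  else if S = {0,1} then w₃ else if S = {0,2} then w₂ else if S = {1,2} then w₁ else 0


theorem ternary_affine_iff (r s t : ℕ) (hr : r < 4) (hs : s < 4) (ht : t < 4)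
    (e₁ e₂ e₃ e₄ : ℂ)
    (he₁ : e₁ = 1 ∨ e₁ = -1) (he₂ : e₂ = 1 ∨ e₂ = -1)
    (he₃ : e₃ = 1 ∨ e₃ = -1) (he₄ : e₄ = 1 ∨ e₄ = -1)
    (f : (Fin 3 → ZMod 2) → ℂ)
    (h000 : f ![0, 0, 0] = 1)
    (h001 : f ![0, 0, 1] = Complex.I ^ r)
    (h010 : f ![0, 1, 0] = Complex.I ^ s)
    (h011 : f ![0, 1, 1] = e₁ * Complex.I ^ (r + s))
    (h100 : f ![1, 0, 0] = Complex.I ^ t)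
    (h101 : f ![1, 0, 1] = e₂ * Complex.I ^ (r + t))
    (h110 : f ![1, 1, 0] = e₃ * Complex.I ^ (s + t))
    (h111 : f ![1, 1, 1] = e₄ * Complex.I ^ (r + s + t)) :
    IsAffine f ↔ e₁ * e₂ * e₃ * e₄ = 1 := by
  have hne : ∀ e : ℂ, (e = 1 ∨ e = -1) → e ≠ 0 := by rintro e (rfl | rfl) <;> norm_num
  have hIne : ∀ k : ℕ, (Complex.I : ℂ) ^ k ≠ 0 := fun k => pow_ne_zero k Complex.I_ne_zero
  constructor
  · rintro ⟨lam, m, A, c, h3, h2, hx⟩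
    have key : ∀ x, f x ≠ 0 → f x = lam * iPow (evalML4 c x) := by
      intro x hfx
      have h := hx x
      by_cases hA : A.mulVec (extend1 x) = 0
      · simpa [hA] using h
      · rw [if_neg hA] at h; simp at h; exact absurd h hfx
    have hQ : evalML4 c ![0,0,0] + evalML4 c ![0,1,1] + evalML4 c ![1,0,1] + evalML4 c ![1,1,0]
        = evalML4 c ![0,0,1] + evalML4 c ![0,1,0] + evalML4 c ![1,0,0] + evalML4 c ![1,1,1] := by
      have h012 : c {0,1,2} = 0 := h3 _ (by decide)
      rw [evalML4_eval, evalML4_eval, evalML4_eval, evalML4_eval,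
          evalML4_eval, evalML4_eval, evalML4_eval, evalML4_eval]
      simp only [Matrix.cons_val_zero, Matrix.cons_val_one, Matrix.head_cons,
        Matrix.cons_val_two, Matrix.tail_cons]
      rw [h012]
      show _ = _
      norm_num [z2z4]
      ring
    have k000 := key ![0,0,0] (by rw [h000]; norm_num)
    have k001 := key ![0,0,1] (by rw [h001]; exact hIne r)
    have k010 := key ![0,1,0] (by rw [h010]; exact hIne s)
    have k100 := key ![1,0,0] (by rw [h100]; exact hIne t)
    have k011 := key ![0,1,1] (by rw [h011]; exact mul_ne_zero (hne _ he₁) (hIne _))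
    have k101 := key ![1,0,1] (by rw [h101]; exact mul_ne_zero (hne _ he₂) (hIne _))
    have k110 := key ![1,1,0] (by rw [h110]; exact mul_ne_zero (hne _ he₃) (hIne _))
    have k111 := key ![1,1,1] (by rw [h111]; exact mul_ne_zero (hne _ he₄) (hIne _))
    have hprod : f ![0,0,0] * f ![0,1,1] * f ![1,0,1] * f ![1,1,0]
        = f ![0,0,1] * f ![0,1,0] * f ![1,0,0] * f ![1,1,1] := by
      rw [k000, k011, k101, k110, k001, k010, k100, k111]
      trans lam^4 * iPow (evalML4 c ![0,0,0] + evalML4 c ![0,1,1] + evalML4 c ![1,0,1]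
        + evalML4 c ![1,1,0])
      · rw [iPow_add, iPow_add, iPow_add]; ring
      · rw [hQ, iPow_add, iPow_add, iPow_add]; ring
    rw [h000, h011, h101, h110, h001, h010, h100, h111] at hprod
    simp only [pow_add] at hprod
    have h123 : e₁ * e₂ * e₃ = e₄ := by
      have hX : (Complex.I^r * Complex.I^s * Complex.I^t : ℂ) ≠ 0 :=
        mul_ne_zero (mul_ne_zero (hIne r) (hIne s)) (hIne t)
      apply mul_right_cancel₀ (pow_ne_zero 2 hX)
      linear_combination hprod
    have h44 : e₁ * e₂ * e₃ * e₄ = e₄ * e₄ := by rw [h123]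
    rw [h44]; rcases he₄ with h4 | h4 <;> rw [h4] <;> norm_num
  · intro h
    have h123 : e₁ * e₂ * e₃ = e₄ := by
      rcases he₄ with h4 | h4 <;> rw [h4] <;> rw [h4] at h
      · linear_combination h
      · linear_combination -h
    have pick : ∀ e : ℂ, (e = 1 ∨ e = -1) → ∃ w : ZMod 4, iPow w = e ∧ ∃ u, w = 2 * u := by
      rintro e (rfl | rfl)
      · exact ⟨0, by simp [iPow], 0, by ring⟩
      · refine ⟨2, ?_, 1, by ring⟩
        show Complex.I ^ (2 : ZMod 4).val = -1
        rw [show ((2 : ZMod 4)).val = 2 from rfl]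
        exact Complex.I_sq
    obtain ⟨w₁, hw₁, u₁, hu₁⟩ := pick e₁ he₁
    obtain ⟨w₂, hw₂, u₂, hu₂⟩ := pick e₂ he₂
    obtain ⟨w₃, hw₃, u₃, hu₃⟩ := pick e₃ he₃
    refine ⟨1, 0, 0, cfun t s r w₃ w₂ w₁, ?_, ?_, ?_⟩
    · intro S hS
      have hSs : S ≠ {0} ∧ S ≠ {1} ∧ S ≠ {2} ∧ S ≠ {0,1} ∧ S ≠ {0,2} ∧ S ≠ {1,2} := by
        revert hS; revert S; decide
      rw [cfun, if_neg hSs.1, if_neg hSs.2.1, if_neg hSs.2.2.1, if_neg hSs.2.2.2.1,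
        if_neg hSs.2.2.2.2.1, if_neg hSs.2.2.2.2.2]
    · intro S hS
      have hc : S = {0,1} ∨ S = {0,2} ∨ S = {1,2} := by revert hS; revert S; decide
      rcases hc with rfl | rfl | rfl
      · exact ⟨u₃, by rw [cfun, if_neg (by decide), if_neg (by decide), if_neg (by decide),
          if_pos rfl]; exact hu₃⟩
      · exact ⟨u₂, by rw [cfun, if_neg (by decide), if_neg (by decide), if_neg (by decide),
          if_neg (by decide), if_pos rfl]; exact hu₂⟩
      · exact ⟨u₁, by rw [cfun, if_neg (by decide), if_neg (by decide), if_neg (by decide),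
          if_neg (by decide), if_neg (by decide), if_pos rfl]; exact hu₁⟩
    · intro x
      have hind : (if (0 : Matrix (Fin 0) (Option (Fin 3)) (ZMod 2)).mulVec (extend1 x) = 0
          then (1:ℂ) else 0) = 1 := if_pos (funext fun i => Fin.elim0 i)
      rw [hind, one_mul, one_mul]
      have hxe : x = ![x 0, x 1, x 2] := by
        funext i; fin_cases i <;> rfl
      have c0 : cfun t s r w₃ w₂ w₁ ∅ = 0 := rfl
      have c1 : cfun t s r w₃ w₂ w₁ {0} = (t : ZMod 4) := rfl
      have c2 : cfun t s r w₃ w₂ w₁ {1} = (s : ZMod 4) := rfl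
      have c3 : cfun t s r w₃ w₂ w₁ {2} = (r : ZMod 4) := rfl
      have c4 : cfun t s r w₃ w₂ w₁ {0,1} = w₃ := rfl
      have c5 : cfun t s r w₃ w₂ w₁ {0,2} = w₂ := rfl
      have c6 : cfun t s r w₃ w₂ w₁ {1,2} = w₁ := rfl
      have c7 : cfun t s r w₃ w₂ w₁ {0,1,2} = 0 := rfl
      have hcase : ∀ a : ZMod 2, a = 0 ∨ a = 1 := by decide
      rcases hcase (x 0) with h0 | h0 <;> rcases hcase (x 1) with h1 | h1 <;>
          rcases hcase (x 2) with h2 | h2 <;>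
        rw [hxe, h0, h1, h2, evalML4_eval, c0, c1, c2, c3, c4, c5, c6, c7] <;>
        simp only [Matrix.cons_val_zero, Matrix.cons_val_one, Matrix.head_cons,
          Matrix.cons_val_two, Matrix.tail_cons,
          show z2z4 0 = 0 from rfl, show z2z4 1 = 1 from rfl,
          mul_one, mul_zero, one_mul, zero_mul, add_zero, zero_add]
      · rw [h000]; simp [iPow]
      · rw [h001, iPow_natCast]
      · rw [h010, iPow_natCast]
      · rw [h011, iPow_add, iPow_add, iPow_natCast, iPow_natCast, hw₁, pow_add]; ring
      · rw [h100, iPow_natCast]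
      · rw [h101, iPow_add, iPow_add, iPow_natCast, iPow_natCast, hw₂, pow_add]; ring
      · rw [h110, iPow_add, iPow_add, iPow_natCast, iPow_natCast, hw₃, pow_add]; ring
      · rw [h111, iPow_add, iPow_add, iPow_add, iPow_add, iPow_add, iPow_natCast,
          iPow_natCast, iPow_natCast, hw₁, hw₂, hw₃, pow_add, pow_add, ← h123]; ring
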